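/- Invariance of the cycle space under the Walsh–Hadamard transform for noisy Clifford gates (Theorem 4 of the paper), stated as a cycle-space membership: let m ∈ ℕ and l ≥ 1. Let τ : V_m → V_m be a bijection preserving the symplectic inner product (⟨τ(P), τ(Q)⟩ = ⟨P,Q⟩ for all P, Q), representing conjugation by G†. Let Q : ZMod l → V_m be a cyclic sequence of labels, and for each k ∈ ZMod l let h_k : V_m → V_m be a bijection that preserves the symplectic inner product and preserves Pauli weight patterns (pt(h_k(R)) = pt(R) for all R), such that h_k(Q_k) = τ(Q_{k+1}) for every k ∈ ZMod l. Then in the free ℝ-module on Pauli weight patterns one has Σ_{k ∈ ZMod l} Σ_{R ∈ V_m} (-1)^{⟨Q_k, R⟩} · ([pt(R)] − [pt(τ(R))]) = 0; i.e., the Walsh–Hadamard transform Σ_{k} Σ_{R} (-1)^{⟨Q_k, R⟩} e^R of the cycle formed by the edges e^{Q_1}, …, e^{Q_l} again has zero boundary. -/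

import Mathlib

open Finset

/-- `m`-qubit Pauli operators modulo phase, as pairs of X- and Z-exponents per qubit. -/
abbrev V (m : ℕ) := Fin m → ZMod 2 × ZMod 2

/-- Symplectic inner product recording (non-)commutation of Pauli operators. -/
def sympl {m : ℕ} (P Q : V m) : ZMod 2 :=
  ∑ i, ((P i).1 * (Q i).2 + (P i).2 * (Q i).1)

/-- Dot product on `Z2^n`. -/
def dot {n : ℕ} (x y : Fin n → ZMod 2) : ZMod 2 := ∑ i, x i * y i

/-- The real sign `(-1)^z` associated with `z : ZMod 2`. -/
def sgn (z : ZMod 2) : ℝ := (-1 : ℝ) ^ z.val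

/-- Pauli weight pattern: `1` on qubits where the Pauli label is non-identity. -/
def pt {N : ℕ} (v : V N) : Fin N → ZMod 2 :=
  fun i => if v i = (0, 0) then 0 else 1

/-- `Q⊞x`: the `(m+n)`-qubit Pauli label of `Q ⊗ Z^x`. -/
def emb {m n : ℕ} (Q : V m) (x : Fin n → ZMod 2) : V (m + n) :=
  Fin.append Q (fun i => ((0 : ZMod 2), x i))

/-- Invariance of the cycle space under the Walsh–Hadamard transform for noisy
Clifford gates (Theorem 4 of the paper): for a cycle `e^{Q_1}, …, e^{Q_l}` of the
pattern transfer graph (witnessed by the symplectic- and pattern-preserving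
single-qubit-Clifford layers `h_k` with `h_k(Q_k) = τ(Q_{k+1})`), its
Walsh–Hadamard transform `Σ_k Σ_R (-1)^{⟨Q_k,R⟩} e^R` again has zero boundary. -/
theorem stmt_9 (m l : ℕ) [NeZero l] (hl : 1 ≤ l)
    (τ : V m → V m) (hτbij : Function.Bijective τ)
    (hτsymp : ∀ P R : V m, sympl (τ P) (τ R) = sympl P R)
    (Q : ZMod l → V m) (h : ZMod l → V m → V m)
    (hbij : ∀ k, Function.Bijective (h k))
    (hsymp : ∀ (k : ZMod l) (P R : V m), sympl (h k P) (h k R) = sympl P R)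
    (hpt : ∀ (k : ZMod l) (R : V m), pt (h k R) = pt R)
    (hQ : ∀ k : ZMod l, h k (Q k) = τ (Q (k + 1))) :
    ∑ k : ZMod l, ∑ R : V m,
      sgn (sympl (Q k) R) •
        (Finsupp.single (pt R) (1 : ℝ) - Finsupp.single (pt (τ R)) (1 : ℝ)) = 0 := by
  have key : ∀ k : ZMod l,
      (∑ R : V m, sgn (sympl (Q k) R) • Finsupp.single (pt R) (1 : ℝ))
      = ∑ R : V m, sgn (sympl (Q (k + 1)) R) • Finsupp.single (pt (τ R)) (1 : ℝ) := by
    intro k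
    have e1 := Fintype.sum_bijective (h k) (hbij k)
      (fun R => sgn (sympl (Q k) R) • Finsupp.single (pt R) (1 : ℝ))
      (fun R => sgn (sympl (τ (Q (k + 1))) R) • Finsupp.single (pt R) (1 : ℝ))
      (fun R => by rw [← hQ k, hsymp, hpt])
    have e2 := Fintype.sum_bijective τ hτbij
      (fun R => sgn (sympl (Q (k + 1)) R) • Finsupp.single (pt (τ R)) (1 : ℝ))
      (fun R => sgn (sympl (τ (Q (k + 1))) R) • Finsupp.single (pt R) (1 : ℝ))
      (fun R => by rw [hτsymp])
    rw [e1, ← e2]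
  simp only [smul_sub, Finset.sum_sub_distrib]
  rw [sub_eq_zero]
  calc ∑ k : ZMod l, ∑ R : V m, sgn (sympl (Q k) R) • Finsupp.single (pt R) (1 : ℝ)
      = ∑ k : ZMod l, ∑ R : V m,
          sgn (sympl (Q (k + 1)) R) • Finsupp.single (pt (τ R)) (1 : ℝ) := by
        exact Finset.sum_congr rfl fun k _ => key k
    _ = ∑ k : ZMod l, ∑ R : V m,
          sgn (sympl (Q k) R) • Finsupp.single (pt (τ R)) (1 : ℝ) :=
        Fintype.sum_equiv (Equiv.addRight (1 : ZMod l)) _ _ (fun k => rfl)
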